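/- arXiv:2201.11670 — 3 statements merged into one kernel-verified Lean document; each statement's English description precedes it below -/
import Mathlib

section
/- (Proposition 1(a)) Let X^n be distributed according to a memoryless source with p_X(x) > 0 for all x ∈ X (so p_{X^n}(x⃗) > 0 for all x⃗ ∈ X^n), independent of (K^n, M_A). If I(C^m; X^n | M_A) = 0 where C^m = Φ(K^n, X^n), then Δ_max-MI = 0: for every alternative plaintext distribution p̄ on X^n (with X̄^n ~ p̄ independent of (K^n, M_A)), I(C̄^m; X̄^n | M_A) = 0 where C̄^m = Φ(K^n, X̄^n). -/
open scoped BigOperators Classical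
open Real

noncomputable section

/-- A probability mass function on a finite type. -/
def IsPmf {Ω : Type*} [Fintype Ω] (μ : Ω → ℝ) : Prop :=
  (∀ ω, 0 ≤ μ ω) ∧ ∑ ω, μ ω = 1

/-- Probability of an event. -/
def pr {Ω : Type*} [Fintype Ω] (μ : Ω → ℝ) (E : Ω → Prop) : ℝ :=
  ∑ ω, if E ω then μ ω else 0

/-- Distribution of a random variable. -/
def dist {Ω A : Type*} [Fintype Ω] (μ : Ω → ℝ) (X : Ω → A) (a : A) : ℝ :=
  pr μ (fun ω => X ω = a)

/-- Shannon entropy (natural log) of a random variable. -/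
def ent {Ω A : Type*} [Fintype Ω] [Fintype A] (μ : Ω → ℝ) (X : Ω → A) : ℝ :=
  -∑ a, dist μ X a * Real.log (dist μ X a)

/-- Conditional entropy H(X|Y). -/
def condEnt {Ω A B : Type*} [Fintype Ω] [Fintype A] [Fintype B]
    (μ : Ω → ℝ) (X : Ω → A) (Y : Ω → B) : ℝ :=
  ent μ (fun ω => (X ω, Y ω)) - ent μ Y

/-- Mutual information I(X;Y). -/
def mutInfo {Ω A B : Type*} [Fintype Ω] [Fintype A] [Fintype B]
    (μ : Ω → ℝ) (X : Ω → A) (Y : Ω → B) : ℝ :=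
  ent μ X + ent μ Y - ent μ (fun ω => (X ω, Y ω))

/-- Conditional mutual information I(X;Y|Z). -/
def condMutInfo {Ω A B C : Type*} [Fintype Ω] [Fintype A] [Fintype B] [Fintype C]
    (μ : Ω → ℝ) (X : Ω → A) (Y : Ω → B) (Z : Ω → C) : ℝ :=
  ent μ (fun ω => (X ω, Z ω)) + ent μ (fun ω => (Y ω, Z ω))
    - ent μ (fun ω => (X ω, Y ω, Z ω)) - ent μ Z

/-- Independence of two random variables. -/
def Indep {Ω A B : Type*} [Fintype Ω] (μ : Ω → ℝ) (X : Ω → A) (Y : Ω → B) : Prop :=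
  ∀ a b, dist μ (fun ω => (X ω, Y ω)) (a, b) = dist μ X a * dist μ Y b

/-- Markov chain U → Z → K. -/
def Markov {Ω A B C : Type*} [Fintype Ω] (μ : Ω → ℝ)
    (U : Ω → A) (Z : Ω → B) (K : Ω → C) : Prop :=
  ∀ u z k, dist μ (fun ω => (U ω, Z ω, K ω)) (u, z, k) * dist μ Z z
    = dist μ (fun ω => (U ω, Z ω)) (u, z) * dist μ (fun ω => (Z ω, K ω)) (z, k)

set_option linter.unusedSectionVars false
set_option linter.unusedVariables false

section Helpers
variable {Ω A B C : Type*} [Fintype Ω] [Fintype A] [Fintype B] [Fintype C]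
variable (μ : Ω → ℝ) (X : Ω → A) (Y : Ω → B) (Z : Ω → C)

lemma dist_nn (hμ : ∀ ω, 0 ≤ μ ω) (a : A) : 0 ≤ _root_.dist μ X a := by
  unfold _root_.dist pr
  apply Finset.sum_nonneg
  intro ω _
  split <;> simp [hμ ω]

lemma dist_marg₁ (a : A) (c : C) :
    _root_.dist μ (fun ω => (X ω, Z ω)) (a, c)
      = ∑ b, _root_.dist μ (fun ω => (X ω, Y ω, Z ω)) (a, b, c) := by
  unfold _root_.dist pr
  rw [Finset.sum_comm]
  refine Finset.sum_congr rfl fun ω _ => ?_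
  rw [Finset.sum_eq_single (Y ω)]
  · simp [Prod.ext_iff, and_assoc, and_left_comm]
  · intro b _ hb
    simp only [Prod.mk.injEq, ite_eq_right_iff, and_imp]
    intro _ h _
    exact absurd h.symm hb
  · simp

lemma dist_marg₂ (b : B) (c : C) :
    _root_.dist μ (fun ω => (Y ω, Z ω)) (b, c)
      = ∑ a, _root_.dist μ (fun ω => (X ω, Y ω, Z ω)) (a, b, c) := by
  unfold _root_.dist pr
  rw [Finset.sum_comm]
  refine Finset.sum_congr rfl fun ω _ => ?_
  rw [Finset.sum_eq_single (X ω)]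
  · simp [Prod.ext_iff]
  · intro a _ ha
    simp only [Prod.mk.injEq, ite_eq_right_iff, and_imp]
    intro h _ _
    exact absurd h.symm ha
  · simp

lemma sum_swap3 (f : A → B → Ω → ℝ) :
    ∑ a, ∑ b, ∑ ω, f a b ω = ∑ ω, ∑ a, ∑ b, f a b ω :=
  (Finset.sum_congr rfl fun _ _ => Finset.sum_comm).trans Finset.sum_comm

lemma dist_marg₃ (c : C) :
    _root_.dist μ Z c = ∑ a, ∑ b, _root_.dist μ (fun ω => (X ω, Y ω, Z ω)) (a, b, c) := by
  unfold _root_.dist pr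
  rw [sum_swap3]
  refine Finset.sum_congr rfl fun ω _ => ?_
  rw [Finset.sum_eq_single (X ω)]
  · rw [Finset.sum_eq_single (Y ω)]
    · simp [Prod.ext_iff]
    · intro b _ hb
      simp only [Prod.mk.injEq, ite_eq_right_iff, and_imp]
      intro _ h _
      exact absurd h.symm hb
    · simp
  · intro a _ ha
    apply Finset.sum_eq_zero
    intro b _
    simp only [Prod.mk.injEq, ite_eq_right_iff, and_imp]
    intro h _ _
    exact absurd h.symm ha
  · simp

lemma condMutInfo_eq :
    condMutInfo μ X Y Z = ∑ a, ∑ b, ∑ c,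
      _root_.dist μ (fun ω => (X ω, Y ω, Z ω)) (a, b, c) *
        (Real.log (_root_.dist μ (fun ω => (X ω, Y ω, Z ω)) (a, b, c))
          + Real.log (_root_.dist μ Z c)
          - Real.log (_root_.dist μ (fun ω => (X ω, Z ω)) (a, c))
          - Real.log (_root_.dist μ (fun ω => (Y ω, Z ω)) (b, c))) := by
  have h3 : ent μ (fun ω => (X ω, Y ω, Z ω))
      = -∑ a, ∑ b, ∑ c, _root_.dist μ (fun ω => (X ω, Y ω, Z ω)) (a, b, c)
          * Real.log (_root_.dist μ (fun ω => (X ω, Y ω, Z ω)) (a, b, c)) := by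
    unfold ent
    rw [Fintype.sum_prod_type]
    congr 1
    exact Finset.sum_congr rfl fun a _ => Fintype.sum_prod_type ..
  have h1 : ent μ (fun ω => (X ω, Z ω))
      = -∑ a, ∑ b, ∑ c, _root_.dist μ (fun ω => (X ω, Y ω, Z ω)) (a, b, c)
          * Real.log (_root_.dist μ (fun ω => (X ω, Z ω)) (a, c)) := by
    unfold ent
    rw [Fintype.sum_prod_type]
    congr 1
    refine Finset.sum_congr rfl fun a _ => ?_
    rw [Finset.sum_comm]
    refine Finset.sum_congr rfl fun c _ => ?_
    rw [dist_marg₁ μ X Y Z, Finset.sum_mul]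
  have h2 : ent μ (fun ω => (Y ω, Z ω))
      = -∑ a, ∑ b, ∑ c, _root_.dist μ (fun ω => (X ω, Y ω, Z ω)) (a, b, c)
          * Real.log (_root_.dist μ (fun ω => (Y ω, Z ω)) (b, c)) := by
    unfold ent
    rw [Fintype.sum_prod_type]
    congr 1
    rw [← sum_swap3 (fun b c a => _root_.dist μ (fun ω => (X ω, Y ω, Z ω)) (a, b, c)
          * Real.log (_root_.dist μ (fun ω => (Y ω, Z ω)) (b, c)))]
    refine Finset.sum_congr rfl fun b _ => Finset.sum_congr rfl fun c _ => ?_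
    rw [dist_marg₂ μ X Y Z, Finset.sum_mul]
  have h4 : ent μ Z
      = -∑ a, ∑ b, ∑ c, _root_.dist μ (fun ω => (X ω, Y ω, Z ω)) (a, b, c)
          * Real.log (_root_.dist μ Z c) := by
    unfold ent
    congr 1
    rw [sum_swap3 (fun a b c => _root_.dist μ (fun ω => (X ω, Y ω, Z ω)) (a, b, c)
          * Real.log (_root_.dist μ Z c))]
    refine Finset.sum_congr rfl fun c _ => ?_
    rw [dist_marg₃ μ X Y Z, Finset.sum_mul]
    exact Finset.sum_congr rfl fun a _ => Finset.sum_mul ..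
  rw [condMutInfo, h1, h2, h3, h4]
  simp only [mul_add, mul_sub, Finset.sum_add_distrib, Finset.sum_sub_distrib]
  ring

end Helpers

lemma key_ineq (a b c r : ℝ) (ha : 0 ≤ a) (hab : a ≤ b) (hac : a ≤ c) (hbr : b ≤ r) :
    (a - (if r = 0 then 0 else b * c / r)
        ≤ a * (Real.log a + Real.log r - Real.log b - Real.log c)) ∧
      (a * (Real.log a + Real.log r - Real.log b - Real.log c)
          ≤ a - (if r = 0 then 0 else b * c / r) → a * r = b * c) := by
  have hb : 0 ≤ b := ha.trans hab
  have hc : 0 ≤ c := ha.trans hac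
  have hr : 0 ≤ r := hb.trans hbr
  rcases eq_or_lt_of_le hr with hr0 | hrpos
  · -- r = 0, hence a = b = 0
    have hb0 : b = 0 := le_antisymm (hbr.trans_eq hr0.symm) hb
    have ha0 : a = 0 := le_antisymm (hab.trans_eq hb0) ha
    simp [ha0, hb0, ← hr0]
  · rw [if_neg hrpos.ne']
    rcases eq_or_lt_of_le hb with hb0 | hbpos
    · have ha0 : a = 0 := le_antisymm (hab.trans_eq hb0.symm) ha
      simp [ha0, ← hb0]
    rcases eq_or_lt_of_le hc with hc0 | hcpos
    · have ha0 : a = 0 := le_antisymm (hac.trans_eq hc0.symm) ha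
      simp [ha0, ← hc0]
    · -- b, c, r > 0
      set t : ℝ := b * c / r with ht
      have htpos : 0 < t := div_pos (mul_pos hbpos hcpos) hrpos
      have hlogt : Real.log t = Real.log b + Real.log c - Real.log r := by
        rw [ht, Real.log_div (mul_pos hbpos hcpos).ne' hrpos.ne',
          Real.log_mul hbpos.ne' hcpos.ne']
      have hexpr : a * (Real.log a + Real.log r - Real.log b - Real.log c)
          = a * (Real.log a - Real.log t) := by rw [hlogt]; ring
      have hart : a * r = b * c ↔ a = t := by
        rw [ht, eq_div_iff hrpos.ne']
      rcases eq_or_lt_of_le ha with ha0 | hapos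
      · constructor
        · rw [← ha0]
          simp only [zero_mul, zero_sub]
          linarith [htpos]
        · intro h
          rw [← ha0] at h ⊢
          simp only [zero_mul, zero_sub, neg_nonneg] at h
          exact absurd (lt_of_lt_of_le htpos (by linarith)) (lt_irrefl 0)
      · -- a > 0
        have hu : Real.log (t / a) ≤ t / a - 1 :=
          Real.log_le_sub_one_of_pos (div_pos htpos hapos)
        have hlogdiv : Real.log (t / a) = Real.log t - Real.log a :=
          Real.log_div htpos.ne' hapos.ne'
        constructor
        · rw [hexpr]
          rw [hlogdiv] at hu
          have := mul_le_mul_of_nonneg_left hu ha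
          have hta : a * (t / a - 1) = t - a := by field_simp
          rw [hta] at this
          rw [mul_sub]
          linarith
        · intro h
          rw [hexpr] at h
          rw [hart]
          by_contra hne
          have hne' : t / a ≠ 1 := by
            intro h1
            exact hne (by field_simp at h1; linarith)
          have hu' : Real.log (t / a) < t / a - 1 :=
            Real.log_lt_sub_one_of_pos (div_pos htpos hapos) hne'
          rw [hlogdiv] at hu'
          have := mul_lt_mul_of_pos_left hu' hapos
          have hta : a * (t / a - 1) = t - a := by field_simp
          rw [hta, mul_sub] at this
          rw [mul_sub] at h
          linarith

section Main
variable {Ω₀ ℳ Xn 𝒞 : Type*} [Fintype Ω₀] [Fintype ℳ] [Fintype Xn] [Fintype 𝒞]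
variable (ν : Ω₀ → ℝ) (F : Ω₀ → Xn → 𝒞) (M : Ω₀ → ℳ) (p : Xn → ℝ)

def Tfun (x : Xn) (c : 𝒞) (m : ℳ) : ℝ := ∑ ω, if F ω x = c ∧ M ω = m then ν ω else 0

def rho (m : ℳ) : ℝ := ∑ ω, if M ω = m then ν ω else 0

lemma Tfun_nn (hν : ∀ ω, 0 ≤ ν ω) (x : Xn) (c : 𝒞) (m : ℳ) : 0 ≤ Tfun ν F M x c m := by
  unfold Tfun; apply Finset.sum_nonneg; intro ω _; split <;> simp [hν ω]

lemma Tfun_le_rho (hν : ∀ ω, 0 ≤ ν ω) (x : Xn) (c : 𝒞) (m : ℳ) :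
    Tfun ν F M x c m ≤ rho ν M m := by
  unfold Tfun rho
  apply Finset.sum_le_sum
  intro ω _
  split
  · next h => simp [h.2]
  · split <;> simp [hν ω]

lemma sum_Tfun (x : Xn) (m : ℳ) : ∑ c, Tfun ν F M x c m = rho ν M m := by
  unfold Tfun rho
  rw [Finset.sum_comm]
  refine Finset.sum_congr rfl fun ω _ => ?_
  rw [Finset.sum_eq_single (F ω x)]
  · simp
  · intro c _ hc
    simp only [ite_eq_right_iff, and_imp]
    intro h _
    exact absurd h.symm hc
  · simp

lemma distQ (c : 𝒞) (x : Xn) (m : ℳ) :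
    _root_.dist (fun w : Ω₀ × Xn => ν w.1 * p w.2)
      (fun w => (F w.1 w.2, w.2, M w.1)) (c, x, m) = p x * Tfun ν F M x c m := by
  unfold _root_.dist pr Tfun
  rw [Fintype.sum_prod_type, Finset.mul_sum]
  refine Finset.sum_congr rfl fun ω _ => ?_
  rw [Finset.sum_eq_single x]
  · simp only [Prod.mk.injEq]
    by_cases h1 : F ω x = c <;> by_cases h2 : M ω = m <;> simp [h1, h2, mul_comm]
  · intro y _ hy
    simp only [Prod.mk.injEq, ite_eq_right_iff, and_imp]
    intro _ h _
    exact absurd h hy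
  · simp

lemma distXM (x : Xn) (m : ℳ) :
    _root_.dist (fun w : Ω₀ × Xn => ν w.1 * p w.2)
      (fun w => (w.2, M w.1)) (x, m) = p x * rho ν M m := by
  unfold _root_.dist pr rho
  rw [Fintype.sum_prod_type, Finset.mul_sum]
  refine Finset.sum_congr rfl fun ω _ => ?_
  rw [Finset.sum_eq_single x]
  · simp only [Prod.mk.injEq]
    by_cases h2 : M ω = m <;> simp [h2, mul_comm]
  · intro y _ hy
    simp only [Prod.mk.injEq, ite_eq_right_iff, and_imp]
    intro h _
    exact absurd h hy
  · simp

lemma distCM (c : 𝒞) (m : ℳ) :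
    _root_.dist (fun w : Ω₀ × Xn => ν w.1 * p w.2)
      (fun w => (F w.1 w.2, M w.1)) (c, m) = ∑ y, p y * Tfun ν F M y c m := by
  unfold _root_.dist pr Tfun
  rw [Fintype.sum_prod_type, Finset.sum_comm]
  refine Finset.sum_congr rfl fun y _ => ?_
  rw [Finset.mul_sum]
  refine Finset.sum_congr rfl fun ω _ => ?_
  simp only [Prod.mk.injEq]
  by_cases h1 : F ω y = c <;> by_cases h2 : M ω = m <;> simp [h1, h2, mul_comm]

lemma distM (m : ℳ) :
    _root_.dist (fun w : Ω₀ × Xn => ν w.1 * p w.2)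
      (fun w => M w.1) m = (∑ y, p y) * rho ν M m := by
  unfold _root_.dist pr rho
  rw [Fintype.sum_prod_type, Finset.mul_sum]
  refine Finset.sum_congr rfl fun ω _ => ?_
  by_cases h2 : M ω = m <;> simp [h2, Finset.mul_sum, Finset.sum_mul, mul_comm]

lemma rho_nn (hν0 : ∀ ω, 0 ≤ ν ω) (m : ℳ) : 0 ≤ rho ν M m := by
  unfold rho; apply Finset.sum_nonneg; intro ω _; split <;> simp [hν0 ω]

lemma sumQ (hp1 : ∑ x, p x = 1) :
    ∑ a : 𝒞, ∑ b : Xn, ∑ c : ℳ, p b * Tfun ν F M b a c = ∑ c : ℳ, rho ν M c := by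
  rw [sum_swap3]
  refine Finset.sum_congr rfl fun c _ => ?_
  rw [Finset.sum_comm]
  calc ∑ b, ∑ a : 𝒞, p b * Tfun ν F M b a c = ∑ b, p b * rho ν M c := by
        refine Finset.sum_congr rfl fun b _ => ?_
        rw [← Finset.mul_sum, sum_Tfun]
    _ = rho ν M c := by rw [← Finset.sum_mul, hp1, one_mul]

lemma sumt (hp1 : ∑ x, p x = 1) :
    (∑ a : 𝒞, ∑ b : Xn, ∑ c : ℳ, (if rho ν M c = 0 then 0 else
      (∑ y, p y * Tfun ν F M y a c) * (p b * rho ν M c) / rho ν M c))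
    = ∑ c : ℳ, rho ν M c := by
  rw [sum_swap3]
  refine Finset.sum_congr rfl fun c _ => ?_
  by_cases h : rho ν M c = 0
  · simp [h]
  · simp only [if_neg h]
    have h1 : ∑ a : 𝒞, ∑ y, p y * Tfun ν F M y a c = rho ν M c := by
      rw [Finset.sum_comm]
      calc ∑ y, ∑ a : 𝒞, p y * Tfun ν F M y a c = ∑ y, p y * rho ν M c := by
            refine Finset.sum_congr rfl fun y _ => ?_
            rw [← Finset.mul_sum, sum_Tfun]
        _ = rho ν M c := by rw [← Finset.sum_mul, hp1, one_mul]
    calc ∑ a : 𝒞, ∑ b, (∑ y, p y * Tfun ν F M y a c) * (p b * rho ν M c) / rho ν M c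
        = ∑ a : 𝒞, (∑ y, p y * Tfun ν F M y a c) * ((∑ b, p b) * rho ν M c) / rho ν M c := by
          refine Finset.sum_congr rfl fun a _ => ?_
          rw [← Finset.sum_div, ← Finset.mul_sum, ← Finset.sum_mul]
      _ = ∑ a : 𝒞, ∑ y, p y * Tfun ν F M y a c := by
          refine Finset.sum_congr rfl fun a _ => ?_
          rw [hp1, one_mul, mul_div_assoc, div_self h, mul_one]
      _ = rho ν M c := h1

lemma forward (hν0 : ∀ ω, 0 ≤ ν ω) (hpp : ∀ x, 0 < p x) (hp1 : ∑ x, p x = 1)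
    (hkey : (∑ a : 𝒞, ∑ b : Xn, ∑ c : ℳ,
      (p b * Tfun ν F M b a c) *
        (Real.log (p b * Tfun ν F M b a c) + Real.log (rho ν M c)
          - Real.log (∑ y, p y * Tfun ν F M y a c)
          - Real.log (p b * rho ν M c))) = 0) :
    ∀ x x' c m, Tfun ν F M x c m = Tfun ν F M x' c m := by
  have hTnn := Tfun_nn ν F M hν0
  have hTρ := Tfun_le_rho ν F M hν0
  have hρnn := rho_nn ν M hν0
  have hbounds : ∀ (a : 𝒞) (b : Xn) (c : ℳ),
      0 ≤ p b * Tfun ν F M b a c ∧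
      p b * Tfun ν F M b a c ≤ (∑ y, p y * Tfun ν F M y a c) ∧
      p b * Tfun ν F M b a c ≤ p b * rho ν M c ∧
      (∑ y, p y * Tfun ν F M y a c) ≤ rho ν M c := by
    intro a b c
    refine ⟨mul_nonneg (hpp b).le (hTnn b a c), ?_, ?_, ?_⟩
    · exact Finset.single_le_sum (f := fun y => p y * Tfun ν F M y a c)
        (fun y _ => mul_nonneg (hpp y).le (hTnn y a c)) (Finset.mem_univ b)
    · exact mul_le_mul_of_nonneg_left (hTρ b a c) (hpp b).le
    · calc ∑ y, p y * Tfun ν F M y a c ≤ ∑ y, p y * rho ν M c :=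
            Finset.sum_le_sum fun y _ => mul_le_mul_of_nonneg_left (hTρ y a c) (hpp y).le
        _ = rho ν M c := by rw [← Finset.sum_mul, hp1, one_mul]
  set g : 𝒞 × Xn × ℳ → ℝ := fun v =>
    (p v.2.1 * Tfun ν F M v.2.1 v.1 v.2.2) *
      (Real.log (p v.2.1 * Tfun ν F M v.2.1 v.1 v.2.2) + Real.log (rho ν M v.2.2)
        - Real.log (∑ y, p y * Tfun ν F M y v.1 v.2.2)
        - Real.log (p v.2.1 * rho ν M v.2.2))
      - (p v.2.1 * Tfun ν F M v.2.1 v.1 v.2.2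
        - (if rho ν M v.2.2 = 0 then 0 else
            (∑ y, p y * Tfun ν F M y v.1 v.2.2) * (p v.2.1 * rho ν M v.2.2) / rho ν M v.2.2))
    with hg
  have hgnn : ∀ v : 𝒞 × Xn × ℳ, 0 ≤ g v := by
    rintro ⟨a, b, c⟩
    obtain ⟨h1, h2, h3, h4⟩ := hbounds a b c
    have h := (key_ineq (p b * Tfun ν F M b a c) (∑ y, p y * Tfun ν F M y a c)
      (p b * rho ν M c) (rho ν M c) h1 h2 h3 h4).1
    simp only [hg]
    linarith
  have hgsum : ∑ v : 𝒞 × Xn × ℳ, g v = 0 := by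
    simp only [hg, Fintype.sum_prod_type, Finset.sum_sub_distrib]
    rw [hkey, sumQ ν F M p hp1, sumt ν F M p hp1]
    ring
  have hzero := (Finset.sum_eq_zero_iff_of_nonneg (fun v _ => hgnn v)).1 hgsum
  intro x x' c m
  have hmain : ∀ b : Xn, Tfun ν F M b c m * rho ν M m
      = (∑ y, p y * Tfun ν F M y c m) * rho ν M m := by
    intro b
    have hz := hzero (c, b, m) (Finset.mem_univ _)
    simp only [hg] at hz
    obtain ⟨h1, h2, h3, h4⟩ := hbounds c b m
    have h := (key_ineq (p b * Tfun ν F M b c m) (∑ y, p y * Tfun ν F M y c m)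
      (p b * rho ν M m) (rho ν M m) h1 h2 h3 h4).2 (by linarith)
    have h' : p b * (Tfun ν F M b c m * rho ν M m)
        = p b * ((∑ y, p y * Tfun ν F M y c m) * rho ν M m) := by linear_combination h
    exact mul_left_cancel₀ (hpp b).ne' h'
  by_cases hm : rho ν M m = 0
  · have e1 : Tfun ν F M x c m = 0 := le_antisymm ((hTρ x c m).trans_eq hm) (hTnn x c m)
    have e2 : Tfun ν F M x' c m = 0 := le_antisymm ((hTρ x' c m).trans_eq hm) (hTnn x' c m)
    rw [e1, e2]
  · exact mul_right_cancel₀ hm ((hmain x).trans (hmain x').symm)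

lemma backward (hν0 : ∀ ω, 0 ≤ ν ω) (hq0 : ∀ x, 0 ≤ p x) (hp1 : ∑ x, p x = 1)
    (hT : ∀ x x' c m, Tfun ν F M x c m = Tfun ν F M x' c m) :
    (∑ a : 𝒞, ∑ b : Xn, ∑ c : ℳ,
      (p b * Tfun ν F M b a c) *
        (Real.log (p b * Tfun ν F M b a c) + Real.log (rho ν M c)
          - Real.log (∑ y, p y * Tfun ν F M y a c)
          - Real.log (p b * rho ν M c))) = 0 := by
  refine Finset.sum_eq_zero fun a _ => Finset.sum_eq_zero fun b _ =>
    Finset.sum_eq_zero fun c _ => ?_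
  have hB1 : (∑ y, p y * Tfun ν F M y a c) = Tfun ν F M b a c := by
    calc ∑ y, p y * Tfun ν F M y a c = ∑ y, p y * Tfun ν F M b a c :=
        Finset.sum_congr rfl fun y _ => by rw [hT y b a c]
      _ = Tfun ν F M b a c := by rw [← Finset.sum_mul, hp1, one_mul]
  rw [hB1]
  by_cases h : p b * Tfun ν F M b a c = 0
  · rw [h, zero_mul]
  · obtain ⟨hpb, hTb⟩ := mul_ne_zero_iff.1 h
    have hTpos : 0 < Tfun ν F M b a c := (Tfun_nn ν F M hν0 b a c).lt_of_ne (Ne.symm hTb)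
    have hρpos : 0 < rho ν M c := lt_of_lt_of_le hTpos (Tfun_le_rho ν F M hν0 b a c)
    rw [Real.log_mul hpb hTb, Real.log_mul hpb hρpos.ne']
    ring

end Main

/-- Proposition 1(a): Let the plaintext `Xⁿ` be i.i.d. with per-letter
distribution `pX` having full support, adjoined independently of `(Kⁿ, M_A)` (product
measure).  If `I(Cᵐ; Xⁿ | M_A) = 0` for `Cᵐ = Φ(Kⁿ, Xⁿ)`, then for every alternative
plaintext distribution `p̄` on `𝒳ⁿ` we also have `I(C̄ᵐ; X̄ⁿ | M_A) = 0`,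
i.e. `Δ_max-MI = 0`. -/
theorem stmt8 {Ω₀ 𝒦 ℳ 𝒳 𝒞 : Type*} {n : ℕ}
    [Fintype Ω₀] [Fintype 𝒦] [Fintype ℳ] [Fintype 𝒳] [Fintype 𝒞]
    (ν : Ω₀ → ℝ) (hν : IsPmf ν) (K : Ω₀ → 𝒦) (M : Ω₀ → ℳ)
    (Φ : 𝒦 → (Fin n → 𝒳) → 𝒞)
    (pX : 𝒳 → ℝ) (hpX : IsPmf pX) (hpos : ∀ x, 0 < pX x)
    (h0 : condMutInfo (fun w : Ω₀ × (Fin n → 𝒳) => ν w.1 * ∏ i, pX (w.2 i))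
        (fun w => Φ (K w.1) w.2) (fun w => w.2) (fun w => M w.1) = 0) :
    ∀ p : (Fin n → 𝒳) → ℝ, IsPmf p →
      condMutInfo (fun w : Ω₀ × (Fin n → 𝒳) => ν w.1 * p w.2)
        (fun w => Φ (K w.1) w.2) (fun w => w.2) (fun w => M w.1) = 0 := by
  intro p hp
  obtain ⟨hν0, hν1⟩ := hν
  obtain ⟨hp0, hp1⟩ := hp
  obtain ⟨hpX0, hpX1⟩ := hpX
  classical
  have hp₀pos : ∀ x : Fin n → 𝒳, 0 < ∏ i, pX (x i) :=
    fun x => Finset.prod_pos fun i _ => hpos (x i)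
  have hp₀sum : ∑ x : Fin n → 𝒳, ∏ i, pX (x i) = 1 := by
    rw [← Fintype.piFinset_univ, ← Finset.prod_univ_sum]
    simp [hpX1]
  have hCMI : ∀ q : (Fin n → 𝒳) → ℝ, (∑ x, q x) = 1 →
      condMutInfo (fun w : Ω₀ × (Fin n → 𝒳) => ν w.1 * q w.2)
        (fun w => Φ (K w.1) w.2) (fun w => w.2) (fun w => M w.1)
      = ∑ a : 𝒞, ∑ b : Fin n → 𝒳, ∑ c : ℳ,
          (q b * Tfun ν (fun ω x => Φ (K ω) x) M b a c) *
            (Real.log (q b * Tfun ν (fun ω x => Φ (K ω) x) M b a c)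
              + Real.log (rho ν M c)
              - Real.log (∑ y, q y * Tfun ν (fun ω x => Φ (K ω) x) M y a c)
              - Real.log (q b * rho ν M c)) := by
    intro q hq1
    rw [condMutInfo_eq]
    simp only [distQ ν (fun ω x => Φ (K ω) x) M q, distCM ν (fun ω x => Φ (K ω) x) M q,
      distXM ν M q, distM ν M q, hq1, one_mul]
  have h0' : condMutInfo (fun w : Ω₀ × (Fin n → 𝒳) => ν w.1 * (fun x => ∏ i, pX (x i)) w.2)
      (fun w => Φ (K w.1) w.2) (fun w => w.2) (fun w => M w.1) = 0 := h0
  have key := (hCMI (fun x => ∏ i, pX (x i)) hp₀sum).symm.trans h0'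
  have hT := forward ν (fun ω x => Φ (K ω) x) M (fun x => ∏ i, pX (x i))
    hν0 hp₀pos hp₀sum key
  rw [hCMI p hp1]
  exact backward ν (fun ω x => Φ (K ω) x) M p hν0 hp0 hp1 hT
end
end

section
/- (Proposition 1(b)) Under the system assumptions, the maximum-mutual-information leakage is lower bounded by Δ_max-MI ≥ m·log|X| − H(K^n | M_A). That is, there exists a plaintext distribution (namely uniform on the decoding set D) for which I(C̄^m; X̄^n | M_A) ≥ m·log|X| − H(K^n | M_A). -/
open scoped BigOperators Classical
open Real

noncomputable section

section Helpers

variable {Ω A B C : Type*} [Fintype Ω] [Fintype A] [Fintype B] [Fintype C]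

/-- entropy of a pmf viewed as a bare function -/
noncomputable def Hf (p : A → ℝ) : ℝ := -∑ a, p a * Real.log (p a)

lemma ent_eq_Hf (μ : Ω → ℝ) (X : Ω → A) : ent μ X = Hf (dist μ X) := rfl

lemma Hf_congr {p q : A → ℝ} (h : ∀ a, p a = q a) : Hf p = Hf q := by
  unfold Hf; congr 1; exact Finset.sum_congr rfl (fun a _ => by rw [h a])

lemma dist_nonneg' {μ : Ω → ℝ} (hμ : ∀ ω, 0 ≤ μ ω) (X : Ω → A) (a : A) :
    0 ≤ dist μ X a := by
  apply Finset.sum_nonneg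
  intro ω _
  split <;> simp [hμ ω]

lemma sum_dist {μ : Ω → ℝ} (hμ : ∑ ω, μ ω = 1) (X : Ω → A) :
    ∑ a, _root_.dist μ X a = 1 := by
  unfold _root_.dist pr
  rw [Finset.sum_comm]
  simp [hμ]

lemma pr_congr {μ : Ω → ℝ} {E F : Ω → Prop} (h : ∀ ω, E ω ↔ F ω) :
    pr μ E = pr μ F := by
  unfold pr
  exact Finset.sum_congr rfl (fun ω _ => by rw [if_congr (h ω) rfl rfl])

lemma pr_prod {Ω₂ : Type*} [Fintype Ω₂] (μ1 : Ω → ℝ) (μ2 : Ω₂ → ℝ)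
    (P : Ω → Prop) (Q : Ω₂ → Prop) :
    pr (fun w : Ω × Ω₂ => μ1 w.1 * μ2 w.2) (fun w => P w.1 ∧ Q w.2)
      = pr μ1 P * pr μ2 Q := by
  unfold pr
  rw [Fintype.sum_prod_type, Finset.sum_mul_sum]
  refine Finset.sum_congr rfl (fun a _ => Finset.sum_congr rfl (fun b _ => ?_))
  by_cases h1 : P a <;> by_cases h2 : Q b <;> simp [h1, h2]

lemma dist_id (u : A → ℝ) (x : A) : _root_.dist u id x = u x := by
  simp [_root_.dist, pr]

lemma Hf_comp_equiv (e : B ≃ A) (p : A → ℝ) : Hf (fun b => p (e b)) = Hf p := by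
  unfold Hf
  congr 1
  exact Fintype.sum_equiv e _ _ (fun b => rfl)

lemma Hf_prod (p : A → ℝ) (q : B → ℝ) (hp : ∀ a, 0 ≤ p a) (hq : ∀ b, 0 ≤ q b)
    (hp1 : ∑ a, p a = 1) (hq1 : ∑ b, q b = 1) :
    Hf (fun x : A × B => p x.1 * q x.2) = Hf p + Hf q := by
  unfold Hf
  rw [Fintype.sum_prod_type]
  have key : ∀ a b, p a * q b * Real.log (p a * q b)
      = p a * Real.log (p a) * q b + p a * (q b * Real.log (q b)) := by
    intro a b
    rcases eq_or_lt_of_le (hp a) with h | h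
    · simp [← h]
    rcases eq_or_lt_of_le (hq b) with h' | h'
    · simp [← h']
    rw [Real.log_mul (ne_of_gt h) (ne_of_gt h')]
    ring
  have : ∀ a, ∑ b, p a * q b * Real.log (p a * q b)
      = p a * Real.log (p a) + p a * (∑ b, q b * Real.log (q b)) := by
    intro a
    rw [Finset.sum_congr rfl (fun b _ => key a b), Finset.sum_add_distrib,
      ← Finset.mul_sum, ← Finset.mul_sum, hq1]
    ring
  rw [Finset.sum_congr rfl (fun a _ => this a), Finset.sum_add_distrib,
    ← Finset.sum_mul, hp1, one_mul]
  ring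

lemma Hf_uniform [DecidableEq A] (D : Finset A) (hD : D.card ≠ 0) :
    Hf (fun a => if a ∈ D then (D.card : ℝ)⁻¹ else 0) = Real.log D.card := by
  unfold Hf
  have : ∀ a : A, (if a ∈ D then (D.card : ℝ)⁻¹ else 0) *
      Real.log (if a ∈ D then (D.card : ℝ)⁻¹ else 0)
      = if a ∈ D then (D.card : ℝ)⁻¹ * Real.log ((D.card : ℝ)⁻¹) else 0 := by
    intro a; split <;> simp
  rw [Finset.sum_congr rfl (fun a _ => this a)]
  rw [Finset.sum_ite_mem, Finset.univ_inter, Finset.sum_const, nsmul_eq_mul]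
  rw [Real.log_inv]
  have hD' : (D.card : ℝ) ≠ 0 := Nat.cast_ne_zero.mpr hD
  field_simp

lemma dist_comp_eq_sum (μ : Ω → ℝ) (Z : Ω → A) (f : A → B) (b : B) :
    _root_.dist μ (fun ω => f (Z ω)) b = ∑ a, if f a = b then _root_.dist μ Z a else 0 := by
  unfold _root_.dist pr
  symm
  have step : ∀ a : A, (if f a = b then ∑ ω, (if Z ω = a then μ ω else 0) else 0)
      = ∑ ω, (if f a = b then (if Z ω = a then μ ω else 0) else 0) := by
    intro a; split
    · rfl
    · simp
  rw [Finset.sum_congr rfl (fun a _ => step a), Finset.sum_comm]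
  refine Finset.sum_congr rfl (fun ω _ => ?_)
  have : ∀ a : A, (if f a = b then (if Z ω = a then μ ω else 0) else 0)
      = if Z ω = a then (if f (Z ω) = b then μ ω else 0) else 0 := by
    intro a
    by_cases h : Z ω = a
    · subst h; by_cases h2 : f (Z ω) = b <;> simp [h2]
    · simp [h]
  rw [Finset.sum_congr rfl (fun a _ => this a)]
  simp

lemma ent_comp_le {μ : Ω → ℝ} (hμ : ∀ ω, 0 ≤ μ ω) (Z : Ω → A) (f : A → B) :
    ent μ (fun ω => f (Z ω)) ≤ ent μ Z := by
  set p := dist μ Z with hp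
  set q := dist μ (fun ω => f (Z ω)) with hq
  have hqs : ∀ b, q b = ∑ a, if f a = b then p a else 0 :=
    fun b => dist_comp_eq_sum μ Z f b
  have hple : ∀ a, p a ≤ q (f a) := by
    intro a
    rw [hqs (f a)]
    have he : p a = (if f a = f a then p a else 0) := by simp
    refine he.trans_le (Finset.single_le_sum
      (f := fun a' => if f a' = f a then p a' else 0) (fun a' _ => ?_) (Finset.mem_univ a))
    show (0:ℝ) ≤ if f a' = f a then p a' else 0
    split
    · exact dist_nonneg' hμ Z a'
    · exact le_rfl
  have h2 : ∑ b, q b * Real.log (q b) = ∑ a, p a * Real.log (q (f a)) := by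
    calc ∑ b, q b * Real.log (q b)
        = ∑ b, ∑ a, (if f a = b then p a * Real.log (q b) else 0) := by
          refine Finset.sum_congr rfl (fun b _ => ?_)
          rw [hqs b, Finset.sum_mul]
          refine Finset.sum_congr rfl (fun a _ => ?_)
          split <;> simp
      _ = ∑ a, ∑ b, (if f a = b then p a * Real.log (q b) else 0) := Finset.sum_comm
      _ = ∑ a, p a * Real.log (q (f a)) := by
          refine Finset.sum_congr rfl (fun a _ => ?_)
          simp
  have hpnn : ∀ a, 0 ≤ p a := fun a => dist_nonneg' hμ Z a
  unfold ent
  rw [← hp, ← hq]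
  apply neg_le_neg
  rw [h2]
  refine Finset.sum_le_sum (fun a _ => ?_)
  rcases (hpnn a).eq_or_lt with h | h
  · simp [← h]
  · have hl := Real.log_le_log h (hple a)
    nlinarith

end Helpers
/-- Proposition 1(b): With `X̌` uniform on the decoding set `D`
(`|D| = |X|^m`, each `Φ_k` a bijection from `D` onto `Xᵐ`), adjoined independently of
the key/side-information space `(Ω₀, ν)`, the plaintext distribution uniform on `D`
witnesses `Δ_max-MI ≥ m·log|X| − H(Kⁿ | M_A)`:
`I(Čᵐ; X̌ⁿ | M_A) ≥ m·log|X| − H(K | M_A)`. -/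
theorem stmt11 {X 𝒦 ℳ Ω₀ : Type*} [Fintype X] [Fintype 𝒦] [Fintype ℳ] [Fintype Ω₀]
    {n m : ℕ}
    (Φ : 𝒦 → (Fin n → X) → (Fin m → X))
    (D : Finset (Fin n → X)) (hD : D.card = Fintype.card X ^ m)
    (hbij : ∀ k, Set.BijOn (Φ k) (D : Set (Fin n → X)) Set.univ)
    (ν : Ω₀ → ℝ) (hν : IsPmf ν) (K : Ω₀ → 𝒦) (M : Ω₀ → ℳ) :
    condMutInfo
        (fun w : Ω₀ × (Fin n → X) => ν w.1 * if w.2 ∈ D then (D.card : ℝ)⁻¹ else 0)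
        (fun w => Φ (K w.1) w.2) (fun w => w.2) (fun w => M w.1)
      ≥ m * Real.log (Fintype.card X) - condEnt ν K M := by
  classical
  obtain ⟨hν0, hν1⟩ := hν
  by_cases hN0 : D.card = 0
  · -- degenerate case : D = ∅, X empty
    have hDe : D = ∅ := Finset.card_eq_zero.mp hN0
    subst hDe
    have hXcard : Fintype.card X = 0 := by
      by_contra h
      exact (pow_ne_zero m h) (by simpa using hD.symm)
    have hcmi : condMutInfo
        (fun w : Ω₀ × (Fin n → X) => ν w.1 * if w.2 ∈ (∅ : Finset (Fin n → X)) then ((∅ : Finset (Fin n → X)).card : ℝ)⁻¹ else 0)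
        (fun w => Φ (K w.1) w.2) (fun w => w.2) (fun w => M w.1) = 0 := by
      simp [condMutInfo, ent, _root_.dist, pr]
    rw [hcmi, hXcard]
    have hce : ent ν M ≤ ent ν (fun ω => (K ω, M ω)) := by
      have h := ent_comp_le hν0 (fun ω => (K ω, M ω)) Prod.snd
      exact h
    simp only [condEnt, Nat.cast_zero, Real.log_zero, mul_zero, ge_iff_le, zero_sub]
    linarith
  · -- main case
    set uu := (fun x : Fin n → X => if x ∈ D then (D.card : ℝ)⁻¹ else 0) with huu
    show condMutInfo (fun w : Ω₀ × (Fin n → X) => ν w.1 * uu w.2)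
        (fun w => Φ (K w.1) w.2) (fun w => w.2) (fun w => M w.1)
      ≥ m * Real.log (Fintype.card X) - condEnt ν K M
    set μ := (fun w : Ω₀ × (Fin n → X) => ν w.1 * uu w.2) with hμdef
    have hNR : (D.card : ℝ) ≠ 0 := Nat.cast_ne_zero.mpr hN0
    have hu0 : ∀ x, 0 ≤ uu x := by
      intro x; rw [huu]; dsimp only; split
      · positivity
      · exact le_rfl
    have hu1 : ∑ x, uu x = 1 := by
      rw [huu]
      simp [Finset.sum_ite_mem, Finset.univ_inter, Finset.sum_const, nsmul_eq_mul]
      field_simp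
    have hμ0 : ∀ w, 0 ≤ μ w := fun w => mul_nonneg (hν0 w.1) (hu0 w.2)
    have prT : pr uu (fun _ => True) = 1 := by
      simpa [pr] using hu1
    have prEq : ∀ x, pr uu (fun y => y = x) = uu x := by
      intro x
      exact dist_id uu x
    -- distribution of M
    have dM : ∀ a, _root_.dist μ (fun w => M w.1) a = _root_.dist ν M a := by
      intro a
      calc _root_.dist μ (fun w => M w.1) a
          = pr μ (fun w => (fun ω => M ω = a) w.1 ∧ (fun _ : Fin n → X => True) w.2) :=
            pr_congr (fun w => by simp)
        _ = _root_.dist ν M a * pr uu (fun _ => True) :=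
            pr_prod ν uu (fun ω => M ω = a) (fun _ => True)
        _ = _root_.dist ν M a := by rw [prT, mul_one]
    -- distribution of (X̌, M)
    have dXM : ∀ z : (Fin n → X) × ℳ, _root_.dist μ (fun w => (w.2, M w.1)) z
        = uu z.1 * _root_.dist ν M z.2 := by
      rintro ⟨x, a⟩
      calc _root_.dist μ (fun w => (w.2, M w.1)) (x, a)
          = pr μ (fun w => (fun ω => M ω = a) w.1 ∧ (fun y => y = x) w.2) :=
            pr_congr (fun w => by simp only [Prod.mk.injEq]; exact and_comm)
        _ = _root_.dist ν M a * pr uu (fun y => y = x) :=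
            pr_prod ν uu (fun ω => M ω = a) (fun y => y = x)
        _ = uu x * _root_.dist ν M a := by rw [prEq]; ring
    -- distribution of (K, X̌, M)
    have dKXM : ∀ t : 𝒦 × (Fin n → X) × ℳ, _root_.dist μ (fun w => (K w.1, w.2, M w.1)) t
        = _root_.dist ν (fun ω => (K ω, M ω)) (t.1, t.2.2) * uu t.2.1 := by
      rintro ⟨k, x, a⟩
      calc _root_.dist μ (fun w => (K w.1, w.2, M w.1)) (k, x, a)
          = pr μ (fun w => (fun ω => (K ω, M ω) = (k, a)) w.1 ∧ (fun y => y = x) w.2) :=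
            pr_congr (fun w => by simp only [Prod.mk.injEq]; tauto)
        _ = _root_.dist ν (fun ω => (K ω, M ω)) (k, a) * pr uu (fun y => y = x) :=
            pr_prod ν uu (fun ω => (K ω, M ω) = (k, a)) (fun y => y = x)
        _ = _root_.dist ν (fun ω => (K ω, M ω)) (k, a) * uu x := by rw [prEq]
    -- the count lemma
    have hcount : ∀ k c, (∑ x, if Φ k x = c then uu x else 0) = (D.card : ℝ)⁻¹ := by
      intro k c
      obtain ⟨x₀, hx₀D, hx₀⟩ : ∃ x₀ ∈ D, Φ k x₀ = c := by
        obtain ⟨x₀, hmem, he⟩ := (hbij k).surjOn (Set.mem_univ c)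
        exact ⟨x₀, Finset.mem_coe.mp hmem, he⟩
      have hterm : ∀ x, (if Φ k x = c then uu x else 0)
          = (if x = x₀ then (D.card : ℝ)⁻¹ else 0) := by
        intro x
        by_cases hx : x = x₀
        · subst hx; simp [hx₀, huu, hx₀D]
        · by_cases h1 : Φ k x = c
          · by_cases h2 : x ∈ D
            · exact absurd ((hbij k).injOn (Finset.mem_coe.mpr h2)
                (Finset.mem_coe.mpr hx₀D) (by rw [h1, hx₀])) hx
            · simp [h1, h2, huu, hx]
          · simp [h1, hx]
      rw [Finset.sum_congr rfl (fun x _ => hterm x)]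
      simp
    -- distribution of (C, M)
    have dCM : ∀ z : (Fin m → X) × ℳ, _root_.dist μ (fun w => (Φ (K w.1) w.2, M w.1)) z
        = (D.card : ℝ)⁻¹ * _root_.dist ν M z.2 := by
      rintro ⟨c, a⟩
      rw [hμdef]
      unfold _root_.dist pr
      rw [Fintype.sum_prod_type]
      dsimp only
      have hrow : ∀ ω₀ : Ω₀,
          (∑ x, @ite ℝ ((Φ (K ω₀) x, M ω₀) = (c, a)) (Classical.propDecidable _)
            (ν ω₀ * uu x) 0)
          = (@ite ℝ (M ω₀ = a) (Classical.propDecidable _) (ν ω₀) 0) * (D.card : ℝ)⁻¹ := by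
        intro ω₀
        by_cases ha : M ω₀ = a
        · rw [← hcount (K ω₀) c, Finset.mul_sum]
          refine Finset.sum_congr rfl (fun x _ => ?_)
          by_cases hc : Φ (K ω₀) x = c <;> simp [hc, ha]
        · simp only [ha, if_false, zero_mul]
          refine Finset.sum_eq_zero (fun x _ => ?_)
          simp [Prod.ext_iff, ha]
      rw [Finset.sum_congr rfl (fun ω₀ _ => hrow ω₀), ← Finset.sum_mul]
      ring
    -- pmf facts for ν-distributions
    have pM0 : ∀ a, 0 ≤ _root_.dist ν M a := dist_nonneg' hν0 M
    have pM1 : ∑ a, _root_.dist ν M a = 1 := sum_dist hν1 M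
    have pKM0 : ∀ t, 0 ≤ _root_.dist ν (fun ω => (K ω, M ω)) t :=
      dist_nonneg' hν0 _
    have pKM1 : ∑ t, _root_.dist ν (fun ω => (K ω, M ω)) t = 1 :=
      sum_dist hν1 _
    have hlog : Real.log (D.card : ℝ) = m * Real.log (Fintype.card X) := by
      rw [hD]
      push_cast
      exact Real.log_pow _ m
    have hcardfun : Fintype.card (Fin m → X) = D.card := by
      rw [hD]; simp [Fintype.card_fun]
    -- entropy computations
    have Hu : Hf uu = Real.log (D.card : ℝ) := by
      rw [huu]; exact Hf_uniform D hN0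
    have eM : ent μ (fun w => M w.1) = ent ν M := by
      rw [ent_eq_Hf, ent_eq_Hf]
      exact Hf_congr dM
    have eXM : ent μ (fun w => (w.2, M w.1))
        = Real.log (D.card : ℝ) + ent ν M := by
      rw [ent_eq_Hf, Hf_congr dXM,
        Hf_prod uu (_root_.dist ν M) hu0 pM0 hu1 pM1, Hu, ent_eq_Hf]
    have eCM : ent μ (fun w => (Φ (K w.1) w.2, M w.1))
        = Real.log (D.card : ℝ) + ent ν M := by
      rw [ent_eq_Hf, Hf_congr dCM,
        Hf_prod (fun _ : Fin m → X => (D.card : ℝ)⁻¹) (_root_.dist ν M)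
          (fun _ => by positivity) pM0
          (by rw [Finset.sum_const, Finset.card_univ, hcardfun, nsmul_eq_mul]; field_simp) pM1,
        ent_eq_Hf]
      congr 1
      -- Hf of constant function = log card
      unfold Hf
      rw [Finset.sum_const, Finset.card_univ, hcardfun, nsmul_eq_mul, Real.log_inv]
      field_simp
    have eKXM : ent μ (fun w => (K w.1, w.2, M w.1))
        = Real.log (D.card : ℝ) + ent ν (fun ω => (K ω, M ω)) := by
      rw [ent_eq_Hf, Hf_congr dKXM]
      have hl : Hf (fun t : 𝒦 × (Fin n → X) × ℳ =>
            _root_.dist ν (fun ω => (K ω, M ω)) (t.1, t.2.2) * uu t.2.1)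
          = Hf (fun s : (𝒦 × ℳ) × (Fin n → X) =>
            _root_.dist ν (fun ω => (K ω, M ω)) s.1 * uu s.2) :=
        Hf_comp_equiv
          (⟨fun t => ((t.1, t.2.2), t.2.1), fun s => (s.1.1, s.2, s.1.2),
            fun _ => rfl, fun _ => rfl⟩ :
            (𝒦 × (Fin n → X) × ℳ) ≃ ((𝒦 × ℳ) × (Fin n → X)))
          (fun s : (𝒦 × ℳ) × (Fin n → X) =>
            _root_.dist ν (fun ω => (K ω, M ω)) s.1 * uu s.2)
      rw [hl, Hf_prod _ uu pKM0 hu0 pKM1 hu1, Hu, ent_eq_Hf]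
      ring
    have hdp : ent μ (fun w => (Φ (K w.1) w.2, w.2, M w.1))
        ≤ ent μ (fun w => (K w.1, w.2, M w.1)) :=
      ent_comp_le hμ0 (fun w => (K w.1, w.2, M w.1))
        (fun t => (Φ t.1 t.2.1, t.2.1, t.2.2))
    simp only [condMutInfo, condEnt, ge_iff_le]
    rw [eM, eXM, eCM]
    linarith [hdp, eKXM, hlog]
end
end

section
/- (Strong converse via source coding) If R < H(X) for a discrete memoryless source with per-letter distribution p_X, then for every τ ∈ (0,1) and every sequence of codes (φ^{(n)}, ψ^{(n)}) with encoder φ^{(n)} : X^n → X^{m} and rate (m/n)log|X| ≤ R + γ for sufficiently small γ > 0, the decoding error probability Pr[ψ^{(n)}(φ^{(n)}(X^n)) ≠ X^n] ≥ 1 − τ for all sufficiently large n. -/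
open scoped BigOperators Classical
open Real

noncomputable section

section AuxStmt18
variable {𝒳 : Type*} [Fintype 𝒳]

lemma stmt18_sum_prod_pi (n : ℕ) (g : Fin n → 𝒳 → ℝ) :
    ∑ x : Fin n → 𝒳, ∏ i, g i (x i) = ∏ i, ∑ a, g i a := by
  rw [Finset.prod_univ_sum, Fintype.piFinset_univ]

lemma stmt18_expect_single (p : 𝒳 → ℝ) (hp1 : ∑ a, p a = 1) {n : ℕ} (i0 : Fin n)
    (w : 𝒳 → ℝ) :
    ∑ x : Fin n → 𝒳, (∏ i, p (x i)) * w (x i0) = ∑ a, p a * w a := by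
  have key : ∀ x : Fin n → 𝒳, (∏ i, p (x i)) * w (x i0)
      = ∏ i, (fun i a => p a * (if i = i0 then w a else 1)) i (x i) := by
    intro x
    simp only
    rw [Finset.prod_mul_distrib, Finset.prod_ite_eq' Finset.univ i0 (fun i => w (x i)),
      if_pos (Finset.mem_univ i0)]
  rw [Finset.sum_congr rfl (fun x _ => key x),
    stmt18_sum_prod_pi n (fun i a => p a * (if i = i0 then w a else 1))]
  have h2 : ∀ i : Fin n, (∑ a, p a * (if i = i0 then w a else 1))
      = if i = i0 then (∑ a, p a * w a) else 1 := by
    intro i; split_ifs with h <;> simp [hp1]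
  rw [Finset.prod_congr rfl (fun i _ => h2 i),
    Finset.prod_ite_eq' Finset.univ i0 (fun _ => ∑ a, p a * w a),
    if_pos (Finset.mem_univ i0)]

lemma stmt18_expect_pair (p : 𝒳 → ℝ) (hp1 : ∑ a, p a = 1) {n : ℕ} {i0 j0 : Fin n}
    (hij : i0 ≠ j0) (u v : 𝒳 → ℝ) :
    ∑ x : Fin n → 𝒳, (∏ i, p (x i)) * (u (x i0) * v (x j0))
      = (∑ a, p a * u a) * (∑ a, p a * v a) := by
  have key : ∀ x : Fin n → 𝒳, (∏ i, p (x i)) * (u (x i0) * v (x j0))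
      = ∏ i, (fun i a => p a * ((if i = i0 then u a else 1) * (if i = j0 then v a else 1))) i (x i) := by
    intro x
    simp only
    rw [Finset.prod_mul_distrib, Finset.prod_mul_distrib,
      Finset.prod_ite_eq' Finset.univ i0 (fun i => u (x i)),
      Finset.prod_ite_eq' Finset.univ j0 (fun i => v (x i)),
      if_pos (Finset.mem_univ i0), if_pos (Finset.mem_univ j0)]
  rw [Finset.sum_congr rfl (fun x _ => key x),
    stmt18_sum_prod_pi n (fun i a => p a * ((if i = i0 then u a else 1) * (if i = j0 then v a else 1)))]
  have h2 : ∀ i : Fin n, (∑ a, p a * ((if i = i0 then u a else 1) * (if i = j0 then v a else 1)))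
      = (if i = i0 then (∑ a, p a * u a) else 1) * (if i = j0 then (∑ a, p a * v a) else 1) := by
    intro i
    rcases eq_or_ne i i0 with h | h
    · subst h; simp [hij]
    · rcases eq_or_ne i j0 with h' | h'
      · subst h'; simp [h]
      · simp [h, h', hp1]
  rw [Finset.prod_congr rfl (fun i _ => h2 i), Finset.prod_mul_distrib,
    Finset.prod_ite_eq' Finset.univ i0 (fun _ => ∑ a, p a * u a),
    Finset.prod_ite_eq' Finset.univ j0 (fun _ => ∑ a, p a * v a),
    if_pos (Finset.mem_univ i0), if_pos (Finset.mem_univ j0)]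

lemma stmt18_second_moment (p : 𝒳 → ℝ) (hp1 : ∑ a, p a = 1)
    (c : 𝒳 → ℝ) (hc : ∑ a, p a * c a = 0) (n : ℕ) :
    ∑ x : Fin n → 𝒳, (∏ i, p (x i)) * (∑ i, c (x i))^2
      = n * ∑ a, p a * (c a * c a) := by
  have expand : ∀ x : Fin n → 𝒳, (∏ k, p (x k)) * (∑ i, c (x i))^2
      = ∑ i, ∑ j, (∏ k, p (x k)) * (c (x i) * c (x j)) := by
    intro x
    rw [sq, Finset.sum_mul_sum, Finset.mul_sum]
    exact Finset.sum_congr rfl fun i _ => Finset.mul_sum _ _ _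
  rw [Finset.sum_congr rfl (fun x _ => expand x), Finset.sum_comm]
  have h1 : ∀ i j : Fin n, ∑ x : Fin n → 𝒳, (∏ k, p (x k)) * (c (x i) * c (x j))
      = if i = j then ∑ a, p a * (c a * c a) else 0 := by
    intro i j
    rcases eq_or_ne i j with h | h
    · subst h; rw [if_pos rfl]
      exact stmt18_expect_single p hp1 i (fun a => c a * c a)
    · rw [if_neg h, stmt18_expect_pair p hp1 h c c, hc, mul_zero]
  calc ∑ i : Fin n, ∑ x : Fin n → 𝒳, ∑ j, (∏ k, p (x k)) * (c (x i) * c (x j))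
      = ∑ i : Fin n, ∑ j, ∑ x : Fin n → 𝒳, (∏ k, p (x k)) * (c (x i) * c (x j)) := by
        exact Finset.sum_congr rfl fun i _ => Finset.sum_comm
    _ = ∑ i : Fin n, ∑ j, (if i = j then ∑ a, p a * (c a * c a) else 0) := by
        exact Finset.sum_congr rfl fun i _ => Finset.sum_congr rfl fun j _ => h1 i j
    _ = n * ∑ a, p a * (c a * c a) := by
        simp [Finset.sum_ite_eq, Finset.mul_sum]

end AuxStmt18

set_option maxHeartbeats 1000000 in
/-- Strong converse for source coding: If `R < H(X)` for a discrete
memoryless source with per-letter distribution `pX`, then for every `τ ∈ (0,1)` there is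
`γ > 0` such that every sequence of fixed-length codes `(φ⁽ⁿ⁾, ψ⁽ⁿ⁾)` of rate
`(m/n)·log|𝒳| ≤ R + γ` has decoding error probability at least `1 − τ` for all
sufficiently large `n`. -/
theorem stmt18 {𝒳 : Type*} [Fintype 𝒳]
    (pX : 𝒳 → ℝ) (hpX : IsPmf pX)
    (R : ℝ) (hR : R < -∑ x, pX x * Real.log (pX x)) :
    ∀ τ ∈ Set.Ioo (0 : ℝ) 1, ∃ γ > (0 : ℝ),
      ∀ (m : ℕ → ℕ)
        (φ : ∀ n, (Fin n → 𝒳) → (Fin (m n) → 𝒳))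
        (ψ : ∀ n, (Fin (m n) → 𝒳) → (Fin n → 𝒳)),
        (∀ n, 1 ≤ n → (m n : ℝ) / n * Real.log (Fintype.card 𝒳) ≤ R + γ) →
        ∃ N, ∀ n ≥ N,
          1 - τ ≤ ∑ x : Fin n → 𝒳,
            (if ψ n (φ n x) ≠ x then ∏ i, pX (x i) else 0) := by
  obtain ⟨hp0, hp1⟩ := hpX
  intro τ hτ
  set H : ℝ := -∑ x, pX x * Real.log (pX x) with hHdef
  set δ : ℝ := (H - R) / 3 with hδdef
  have hδ : 0 < δ := by rw [hδdef]; linarith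
  refine ⟨δ, hδ, ?_⟩
  intro m φ ψ hrate
  -- basic facts
  have hne : Nonempty 𝒳 := by
    rcases isEmpty_or_nonempty 𝒳 with h | h
    · exfalso; rw [Finset.univ_eq_empty, Finset.sum_empty] at hp1; norm_num at hp1
    · exact h
  have hcpos : (0 : ℝ) < Fintype.card 𝒳 := by exact_mod_cast Fintype.card_pos
  set f : 𝒳 → ℝ := fun a => -Real.log (pX a) with hfdef
  set c : 𝒳 → ℝ := fun a => f a - H with hcdef
  have hEf : ∑ a, pX a * f a = H := by
    rw [hHdef, ← Finset.sum_neg_distrib]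
    exact Finset.sum_congr rfl fun a _ => by rw [hfdef]; ring
  have hEc : ∑ a, pX a * c a = 0 := by
    have : ∑ a, pX a * c a = (∑ a, pX a * f a) - (∑ a, pX a) * H := by
      rw [Finset.sum_mul, ← Finset.sum_sub_distrib]
      exact Finset.sum_congr rfl fun a _ => by rw [hcdef]; ring
    rw [this, hEf, hp1, one_mul, sub_self]
  set V : ℝ := ∑ a, pX a * (c a * c a) with hVdef
  have hV0 : 0 ≤ V := Finset.sum_nonneg fun a _ => mul_nonneg (hp0 a) (mul_self_nonneg _)
  set C : ℝ := 1 / δ + V / δ ^ 2 with hCdef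
  have hC0 : 0 ≤ C := by positivity
  refine ⟨⌈C / τ⌉₊ + 1, ?_⟩
  intro n hn
  have hn1 : 1 ≤ n := le_trans (Nat.le_add_left 1 _) hn
  have hnR : (1 : ℝ) ≤ n := by exact_mod_cast hn1
  have hnpos : (0 : ℝ) < n := by linarith
  set P : (Fin n → 𝒳) → ℝ := fun x => ∏ i, pX (x i) with hPdef
  have hP0 : ∀ x, 0 ≤ P x := fun x => Finset.prod_nonneg fun i _ => hp0 _
  have htotal : ∑ x : Fin n → 𝒳, P x = 1 := by
    have h := stmt18_sum_prod_pi (𝒳 := 𝒳) n (fun _ a => pX a)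
    simpa [hp1] using h
  set S : Finset (Fin n → 𝒳) := Finset.univ.filter (fun x => ψ n (φ n x) = x) with hSdef
  have hgoal : (∑ x : Fin n → 𝒳, if ψ n (φ n x) ≠ x then P x else 0)
      = 1 - ∑ x ∈ S, P x := by
    rw [hSdef, Finset.sum_filter, ← htotal, ← Finset.sum_sub_distrib]
    exact Finset.sum_congr rfl fun x _ => by
      by_cases h : ψ n (φ n x) = x <;> simp [h]
  -- rate bound
  have hml : (m n : ℝ) * Real.log (Fintype.card 𝒳) ≤ n * (R + δ) := by
    have h := hrate n hn1
    rw [div_mul_eq_mul_div, div_le_iff₀ hnpos] at h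
    linarith
  -- card bound on correct set
  have hcardS : (S.card : ℝ) ≤ Real.exp ((m n) * Real.log (Fintype.card 𝒳)) := by
    have hinj : Set.InjOn (φ n) S := by
      intro x hx y hy hxy
      rw [hSdef, Finset.coe_filter] at hx hy
      have hx' := hx.2
      have hy' := hy.2
      rw [← hx', ← hy', hxy]
    have h1 : S.card ≤ (Finset.univ : Finset (Fin (m n) → 𝒳)).card :=
      Finset.card_le_card_of_injOn (φ n) (fun x _ => Finset.mem_univ _) hinj
    have h2 : ((Finset.univ : Finset (Fin (m n) → 𝒳)).card : ℝ)
        = Real.exp ((m n) * Real.log (Fintype.card 𝒳)) := by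
      rw [Finset.card_univ, Fintype.card_fun, Fintype.card_fin]
      rw [Real.exp_nat_mul, Real.exp_log hcpos]
      push_cast
      ring
    calc (S.card : ℝ) ≤ ((Finset.univ : Finset (Fin (m n) → 𝒳)).card : ℝ) := by exact_mod_cast h1
      _ = _ := h2
  -- split S by probability threshold
  set b : ℝ := n * (H - δ) with hbdef
  set S1 : Finset (Fin n → 𝒳) := S.filter (fun x => P x ≤ Real.exp (-b)) with hS1def
  set S2 : Finset (Fin n → 𝒳) := S.filter (fun x => ¬ (P x ≤ Real.exp (-b))) with hS2def
  have hsplit : ∑ x ∈ S, P x = ∑ x ∈ S1, P x + ∑ x ∈ S2, P x :=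
    (Finset.sum_filter_add_sum_filter_not S _ P).symm
  -- bound on S1
  have hS1bound : ∑ x ∈ S1, P x ≤ 1 / (n * δ) := by
    have h1 : ∑ x ∈ S1, P x ≤ S1.card • Real.exp (-b) := by
      apply Finset.sum_le_card_nsmul
      intro x hx
      exact (Finset.mem_filter.mp hx).2
    have h2 : (S1.card : ℝ) ≤ (S.card : ℝ) := by
      exact_mod_cast Finset.card_le_card (Finset.filter_subset _ S)
    have h3 : ∑ x ∈ S1, P x ≤ (S.card : ℝ) * Real.exp (-b) := by
      rw [nsmul_eq_mul] at h1
      exact h1.trans (mul_le_mul_of_nonneg_right h2 (Real.exp_pos _).le)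
    have h4 : (S.card : ℝ) * Real.exp (-b) ≤ Real.exp (-(n * δ)) := by
      calc (S.card : ℝ) * Real.exp (-b)
          ≤ Real.exp ((m n) * Real.log (Fintype.card 𝒳)) * Real.exp (-b) :=
            mul_le_mul_of_nonneg_right hcardS (Real.exp_pos _).le
        _ = Real.exp ((m n) * Real.log (Fintype.card 𝒳) - b) := by rw [← Real.exp_add]; ring_nf
        _ ≤ Real.exp (-(n * δ)) := by
            apply Real.exp_le_exp.mpr
            rw [hbdef]
            have : H - R = 3 * δ := by rw [hδdef]; ring
            nlinarith [hml]
    have h5 : Real.exp (-(n * δ)) ≤ 1 / (n * δ) := by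
      have hnd : 0 < n * δ := mul_pos hnpos hδ
      have he : n * δ ≤ Real.exp (n * δ) := by
        have := Real.add_one_le_exp (n * δ); linarith
      rw [Real.exp_neg, inv_eq_one_div]
      exact one_div_le_one_div_of_le hnd he
    linarith
  -- bound on S2 via Chebyshev
  have hS2bound : ∑ x ∈ S2, P x ≤ (V / δ ^ 2) / n := by
    set T : Finset (Fin n → 𝒳) :=
      Finset.univ.filter (fun x => (∑ i, c (x i)) ≤ -(n * δ)) with hTdef
    have hsub : S2 ⊆ T := by
      intro x hx
      have hPx : Real.exp (-b) < P x := by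
        have := (Finset.mem_filter.mp hx).2
        linarith [not_le.mp this]
      have hPxpos : 0 < P x := lt_trans (Real.exp_pos _) hPx
      have hnz : ∀ i, pX (x i) ≠ 0 := by
        intro i h0
        have hzero : P x = 0 := Finset.prod_eq_zero (Finset.mem_univ i) h0
        rw [hzero] at hPxpos
        exact lt_irrefl 0 hPxpos
      have hlog : Real.log (P x) = ∑ i, Real.log (pX (x i)) := by
        rw [hPdef]
        exact Real.log_prod (fun i _ => hnz i)
      have hfx : ∑ i, f (x i) = -Real.log (P x) := by
        rw [hlog, ← Finset.sum_neg_distrib]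
      have hlogP : -b < Real.log (P x) :=
        (Real.lt_log_iff_exp_lt hPxpos).mpr hPx
      have hcx : (∑ i, c (x i)) = (∑ i, f (x i)) - n * H := by
        rw [hcdef]
        simp only
        rw [Finset.sum_sub_distrib, Finset.sum_const, Finset.card_univ,
          Fintype.card_fin, nsmul_eq_mul]
      rw [hTdef, Finset.mem_filter]
      refine ⟨Finset.mem_univ _, ?_⟩
      rw [hcx, hfx]
      rw [hbdef] at hlogP
      have hexp : (n : ℝ) * (H - δ) = n * H - n * δ := by ring
      linarith
    have hTbound : ∑ x ∈ T, P x ≤ (n * V) / (n * δ) ^ 2 := by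
      have hnd : (0 : ℝ) < (n * δ) ^ 2 := by positivity
      rw [le_div_iff₀ hnd]
      calc (∑ x ∈ T, P x) * (n * δ) ^ 2 = ∑ x ∈ T, P x * (n * δ) ^ 2 := Finset.sum_mul _ _ _
        _ ≤ ∑ x ∈ T, P x * (∑ i, c (x i)) ^ 2 := by
            apply Finset.sum_le_sum
            intro x hx
            have hcx := (Finset.mem_filter.mp hx).2
            have : (n * δ) ^ 2 ≤ (∑ i, c (x i)) ^ 2 := by nlinarith [mul_pos hnpos hδ]
            exact mul_le_mul_of_nonneg_left this (hP0 x)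
        _ ≤ ∑ x : Fin n → 𝒳, P x * (∑ i, c (x i)) ^ 2 := by
            apply Finset.sum_le_sum_of_subset_of_nonneg (Finset.subset_univ T)
            intro x _ _
            exact mul_nonneg (hP0 x) (sq_nonneg _)
        _ = n * V := stmt18_second_moment pX hp1 c hEc n
    have heq : (n * V) / (n * δ) ^ 2 = (V / δ ^ 2) / n := by
      field_simp
    calc ∑ x ∈ S2, P x ≤ ∑ x ∈ T, P x :=
          Finset.sum_le_sum_of_subset_of_nonneg hsub (fun x _ _ => hP0 x)
      _ ≤ (n * V) / (n * δ) ^ 2 := hTbound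
      _ = (V / δ ^ 2) / n := heq
  -- combine
  have hCn : ∑ x ∈ S, P x ≤ C / n := by
    rw [hsplit, hCdef]
    have : (1 / δ + V / δ ^ 2) / n = 1 / (n * δ) + (V / δ ^ 2) / n := by
      field_simp
    rw [this]
    linarith
  have hCτ : C / n ≤ τ := by
    have h1 : C / τ ≤ (⌈C / τ⌉₊ : ℝ) := Nat.le_ceil _
    have h2 : ((⌈C / τ⌉₊ : ℕ) : ℝ) ≤ n := by
      have : (⌈C / τ⌉₊ : ℕ) ≤ n := le_trans (Nat.le_add_right _ 1) hn
      exact_mod_cast this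
    have hτ0 := hτ.1
    rw [div_le_iff₀ hnpos]
    rw [div_le_iff₀ hτ0] at h1
    calc C ≤ (⌈C / τ⌉₊ : ℝ) * τ := h1
      _ ≤ n * τ := mul_le_mul_of_nonneg_right h2 hτ0.le
      _ = τ * n := mul_comm _ _
  rw [hgoal]
  linarith
end
end
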